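/- Let φ : ℝ → ℝ be continuously differentiable and β > 0, μ0, δr ∈ ℝ be such that the hybrid h is a well-defined probability measure with finite mean μ_h and finite variance v_h > 0, φ' is h-integrable, and the unnormalized density l(x)·exp(−(β/2)x² + (β μ0 − δr)x) tends to 0 as x → ±∞. Then the site natural parameters r_site := μ_h/v_h − (β μ0 − δr) and β_site := v_h⁻¹ − β satisfy the exact identity r_site = β_site·μ_h − E_h[φ'(x)]. -/

import Mathlib

open MeasureTheory Real Filter

noncomputable section

/-- Unnormalized density of the hybrid distribution:
`l(x) · exp(−(β/2)x² + (β μ0 − δr)x)` with `l = exp (−φ)`. -/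
def hybridDens (φ : ℝ → ℝ) (β μ0 δr : ℝ) (x : ℝ) : ℝ :=
  Real.exp (-(φ x) - β / 2 * x ^ 2 + (β * μ0 - δr) * x)

/-- The hybrid distribution: the normalized measure with density
proportional to `hybridDens`. -/
def hybrid (φ : ℝ → ℝ) (β μ0 δr : ℝ) : Measure ℝ :=
  ((volume.withDensity fun x => ENNReal.ofReal (hybridDens φ β μ0 δr x)) Set.univ)⁻¹ •
    (volume.withDensity fun x => ENNReal.ofReal (hybridDens φ β μ0 δr x))

/-- Mean of the hybrid distribution. -/
def hybridMean (φ : ℝ → ℝ) (β μ0 δr : ℝ) : ℝ :=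
  ∫ x, x ∂(hybrid φ β μ0 δr)

/-- Variance of the hybrid distribution. -/
def hybridVar (φ : ℝ → ℝ) (β μ0 δr : ℝ) : ℝ :=
  ∫ x, (x - hybridMean φ β μ0 δr) ^ 2 ∂(hybrid φ β μ0 δr)

/-- exact identity for the site natural parameters.  If `φ` is C¹,
the hybrid is a well-defined probability measure with finite mean `μ_h` and finite
variance `v_h > 0`, `φ'` is `h`-integrable, and the unnormalized density vanishes
at `±∞`, then `r_site = β_site·μ_h − E_h[φ'(x)]`, where
`r_site := μ_h/v_h − (β μ0 − δr)` and `β_site := v_h⁻¹ − β`. -/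
theorem site_parameters_exact_identity
    (φ : ℝ → ℝ) (hφ : ContDiff ℝ 1 φ)
    (β μ0 δr : ℝ) (hβ : 0 < β)
    (hprob : IsProbabilityMeasure (hybrid φ β μ0 δr))
    (hmean : Integrable (fun x => x) (hybrid φ β μ0 δr))
    (hm2 : Integrable (fun x => x ^ 2) (hybrid φ β μ0 δr))
    (hvar : 0 < hybridVar φ β μ0 δr)
    (hd : Integrable (fun x => deriv φ x) (hybrid φ β μ0 δr))
    (htop : Tendsto (fun x => hybridDens φ β μ0 δr x) atTop (nhds 0))
    (hbot : Tendsto (fun x => hybridDens φ β μ0 δr x) atBot (nhds 0)) :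
    hybridMean φ β μ0 δr / hybridVar φ β μ0 δr - (β * μ0 - δr) =
      ((hybridVar φ β μ0 δr)⁻¹ - β) * hybridMean φ β μ0 δr -
        ∫ x, deriv φ x ∂(hybrid φ β μ0 δr) := by
  set c : ℝ := β * μ0 - δr with hc
  set D : ℝ → ℝ := hybridDens φ β μ0 δr with hD
  set h : Measure ℝ := hybrid φ β μ0 δr with hh
  have hφd : Differentiable ℝ φ := hφ.differentiable one_ne_zero
  have hφ' : Continuous (deriv φ) := hφ.continuous_deriv le_rfl
  have hDcont : Continuous D := by
    rw [hD]
    unfold hybridDens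
    exact Real.continuous_exp.comp (by fun_prop)
  -- derivative of the unnormalized density
  have hderiv : ∀ x : ℝ, HasDerivAt D ((c - β * x - deriv φ x) * D x) x := by
    intro x
    have h2 : HasDerivAt (fun x : ℝ => β / 2 * x ^ 2) (β * x) x := by
      have := (hasDerivAt_pow 2 x).const_mul (β / 2)
      refine this.congr_deriv ?_
      simp; ring
    have h1 : HasDerivAt (fun x => -(φ x) - β / 2 * x ^ 2 + c * x)
        (-(deriv φ x) - β * x + c) x := by
      have h3 := ((hφd x).hasDerivAt.neg.sub h2).add ((hasDerivAt_id x).const_mul c)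
      refine h3.congr_deriv ?_
      ring
    have h4 := h1.exp
    refine h4.congr_deriv ?_
    rw [hD]; unfold hybridDens
    ring
  -- measure setup
  set ν : Measure ℝ := volume.withDensity fun x => ENNReal.ofReal (D x) with hν
  set M : ENNReal := ν Set.univ with hM
  have hhyb : h = M⁻¹ • ν := rfl
  have hMone : M⁻¹ * M = 1 := by
    have hu : h Set.univ = 1 := hprob.measure_univ
    rw [hhyb] at hu
    simpa [Measure.smul_apply, smul_eq_mul] using hu
  have hM0 : M ≠ 0 := by
    intro e
    rw [e, mul_zero] at hMone
    exact zero_ne_one hMone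
  have hMtop : M ≠ ⊤ := by
    intro e
    rw [e, ENNReal.inv_top, zero_mul] at hMone
    exact zero_ne_one hMone
  have hMinv0 : M⁻¹ ≠ 0 := ENNReal.inv_ne_zero.2 hMtop
  have hMinvtop : M⁻¹ ≠ ⊤ := ENNReal.inv_ne_top.2 hM0
  have hmeasD : Measurable fun x => ENNReal.ofReal (D x) :=
    ENNReal.measurable_ofReal.comp hDcont.measurable
  have hlt : ∀ᵐ x ∂(volume : Measure ℝ), ENNReal.ofReal (D x) < ⊤ :=
    Filter.Eventually.of_forall fun x => ENNReal.ofReal_lt_top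
  -- the combined integrand
  set f : ℝ → ℝ := fun x => c - β * x - deriv φ x with hf
  have hfh : Integrable f h := by
    exact ((integrable_const c).sub (hmean.const_mul β)).sub hd
  have hfν : Integrable f ν := by
    have := (integrable_smul_measure hMinv0 hMinvtop).1 (hhyb ▸ hfh)
    exact this
  have hfd_int : Integrable (fun x => f x * D x) volume := by
    have := (integrable_withDensity_iff hmeasD hlt).1 hfν
    simpa [ENNReal.toReal_ofReal (Real.exp_pos _).le, hD, hybridDens] using this
  -- f x * D x is exactly the derivative of D
  have hfd_eq : ∀ x, f x * D x = (c - β * x - deriv φ x) * D x := fun x => rfl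
  -- FTC on the real line: ∫ D' = 0
  have hint0 : ∫ x, f x * D x = 0 := by
    have hIoi : ∫ x in Set.Ioi (0:ℝ), f x * D x = 0 - D 0 := by
      refine integral_Ioi_of_hasDerivAt_of_tendsto' (fun x _ => hderiv x)
        (hfd_int.integrableOn) ?_
      exact htop
    have hIic : ∫ x in Set.Iic (0:ℝ), f x * D x = D 0 - 0 := by
      refine integral_Iic_of_hasDerivAt_of_tendsto' (fun x _ => hderiv x)
        (hfd_int.integrableOn) ?_
      exact hbot
    have := intervalIntegral.integral_Iic_add_Ioi (b := (0:ℝ)) (μ := volume)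
      (hfd_int.integrableOn) (hfd_int.integrableOn)
    rw [← this, hIoi, hIic]
    ring
  -- transfer to the hybrid measure
  have hintν : ∫ x, f x ∂ν = ∫ x, f x * D x := by
    have : (fun x => ENNReal.ofReal (D x)) = fun x => ((D x).toNNReal : ENNReal) := rfl
    rw [hν, this, integral_withDensity_eq_integral_smul
      hDcont.measurable.real_toNNReal]
    congr 1
    ext x
    simp [NNReal.smul_def, Real.coe_toNNReal _ (Real.exp_pos _).le, mul_comm, hD, hybridDens]
  have hinth : ∫ x, f x ∂h = 0 := by
    rw [hhyb, integral_smul_measure, hintν, hint0, smul_zero]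
  -- expand the integral of f
  have hexp : ∫ x, f x ∂h = c - β * hybridMean φ β μ0 δr - ∫ x, deriv φ x ∂h := by
    have hint1 : Integrable (fun x : ℝ => c - β * x) h :=
      (integrable_const c).sub (hmean.const_mul β)
    have hint2 : Integrable (fun x : ℝ => β * x) h := hmean.const_mul β
    rw [hf]
    rw [integral_sub hint1 hd, integral_sub (integrable_const c) hint2]
    rw [integral_const_mul, integral_const]
    simp [hybridMean, ← hh]
  have hkey : (∫ x, deriv φ x ∂h) = c - β * hybridMean φ β μ0 δr := by
    rw [hexp] at hinth; linarith
  rw [hkey, div_eq_inv_mul]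
  ring
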